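/- Let A be a C*-algebra and let a′₁, …, a′ₙ, x₁, …, xₙ, c₁, …, cₘ, d₁, …, dₘ ∈ A be such that each a′ᵢ commutes with each cⱼ* (that is, a′ᵢ cⱼ* = cⱼ* a′ᵢ for all i, j). Then ‖∑_{i=1}^n a′ᵢ (∑_{j=1}^m cⱼ* xᵢ dⱼ)‖ ≤ ‖∑_{j=1}^m cⱼ* cⱼ‖^{1/2} · ‖∑_{i=1}^n a′ᵢ xᵢ‖ · ‖∑_{j=1}^m dⱼ* dⱼ‖^{1/2}. -/

import Mathlib

open scoped InnerProductSpace

/-- Key estimate in an ordered non-unital C*-algebra via Hilbert C*-module Cauchy–Schwarz. -/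
theorem aux_norm_sum {B : Type*} [NonUnitalCStarAlgebra B] [PartialOrder B]
    [StarOrderedRing B] {m : ℕ} (y : B) (c d : Fin m → B) :
    ‖∑ j, star (c j) * y * d j‖ ≤
      Real.sqrt ‖∑ j, star (c j) * c j‖ * ‖y‖ * Real.sqrt ‖∑ j, star (d j) * d j‖ := by
  classical
  set E := WithCStarModule B (Π _ : Fin m, B)
  let C : E := (WithCStarModule.equiv B (Π _ : Fin m, B)).symm (fun j => star (d j))
  let D : E := (WithCStarModule.equiv B (Π _ : Fin m, B)).symm (fun j => star (c j) * y)
  have hinner : ⟪C, D⟫_B = ∑ j, star (c j) * y * d j := by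
    rw [WithCStarModule.pi_inner]
    exact Finset.sum_congr rfl fun j _ => by
      simp [C, D, WithCStarModule.inner_def, mul_assoc]
  have hC : ‖C‖ = Real.sqrt ‖∑ j, star (d j) * d j‖ := by
    rw [WithCStarModule.pi_norm]
    simp [C, WithCStarModule.inner_def]
  have hD : ‖D‖ ≤ ‖y‖ * Real.sqrt ‖∑ j, star (c j) * c j‖ := by
    rw [WithCStarModule.pi_norm]
    have hsum : ∑ j, ⟪D j, D j⟫_B ≤ (‖y‖ * ‖y‖) • ∑ j, star (c j) * c j := by
      rw [Finset.smul_sum]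
      refine Finset.sum_le_sum fun j _ => ?_
      have : ⟪D j, D j⟫_B = star (c j) * (y * star y) * c j := by
        simp [D, WithCStarModule.inner_def, star_mul, mul_assoc]
      rw [this, ← CStarRing.norm_self_mul_star]
      exact CStarAlgebra.star_left_conjugate_le_norm_smul (IsSelfAdjoint.mul_star_self y)
    have hnn : (0 : B) ≤ ∑ j, ⟪D j, D j⟫_B :=
      Finset.sum_nonneg fun j _ => CStarModule.inner_self_nonneg
    have := CStarAlgebra.norm_le_norm_of_nonneg_of_le hnn hsum
    calc Real.sqrt ‖∑ j, ⟪D j, D j⟫_B‖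
        ≤ Real.sqrt ‖(‖y‖ * ‖y‖) • ∑ j, star (c j) * c j‖ := Real.sqrt_le_sqrt this
      _ = ‖y‖ * Real.sqrt ‖∑ j, star (c j) * c j‖ := by
          rw [norm_smul]
          rw [Real.sqrt_mul (by positivity)]
          congr 1
          · rw [Real.norm_eq_abs, abs_of_nonneg (by positivity), Real.sqrt_mul_self (norm_nonneg _)]
  calc ‖∑ j, star (c j) * y * d j‖ = ‖⟪C, D⟫_B‖ := by rw [hinner]
    _ ≤ ‖C‖ * ‖D‖ := CStarModule.norm_inner_le E
    _ ≤ Real.sqrt ‖∑ j, star (d j) * d j‖ * (‖y‖ * Real.sqrt ‖∑ j, star (c j) * c j‖) := by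
        rw [hC]; exact mul_le_mul_of_nonneg_left hD (Real.sqrt_nonneg _)
    _ = _ := by ring


/-- The computation in the proof of (i) ⇒ (ii) of Theorem 2.1 of Magajna, "Pointwise
approximation by elementary complete contractions": if each `a'ᵢ` commutes with each `cⱼ*`,
then `‖∑ᵢ a'ᵢ (∑ⱼ cⱼ* xᵢ dⱼ)‖ ≤ ‖∑ⱼ cⱼ* cⱼ‖^{1/2} ‖∑ᵢ a'ᵢ xᵢ‖ ‖∑ⱼ dⱼ* dⱼ‖^{1/2}`. -/
theorem norm_sum_commutant_elementary_le
    {A : Type*} [NonUnitalCStarAlgebra A] {n m : ℕ}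
    (a' x : Fin n → A) (c d : Fin m → A)
    (hcomm : ∀ i j, a' i * star (c j) = star (c j) * a' i) :
    ‖∑ i, a' i * (∑ j, star (c j) * x i * d j)‖ ≤
      Real.sqrt ‖∑ j, star (c j) * c j‖ * ‖∑ i, a' i * x i‖ *
        Real.sqrt ‖∑ j, star (d j) * d j‖ := by
  set y : A := ∑ i, a' i * x i with hy
  have key : ∑ i, a' i * (∑ j, star (c j) * x i * d j) = ∑ j, star (c j) * y * d j := by
    simp only [Finset.mul_sum, hy, Finset.sum_mul]
    rw [Finset.sum_comm]
    refine Finset.sum_congr rfl fun j _ => Finset.sum_congr rfl fun i _ => ?_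
    calc a' i * (star (c j) * x i * d j) = (a' i * star (c j)) * x i * d j := by simp only [mul_assoc]
      _ = (star (c j) * a' i) * x i * d j := by rw [hcomm]
      _ = star (c j) * (a' i * x i) * d j := by simp only [mul_assoc]
  rw [key]
  letI : PartialOrder (Unitization ℂ A) := CStarAlgebra.spectralOrder _
  letI : StarOrderedRing (Unitization ℂ A) := CStarAlgebra.spectralOrderedRing _
  have h := aux_norm_sum (B := Unitization ℂ A) (y : Unitization ℂ A)
      (fun j => (c j : Unitization ℂ A)) (fun j => (d j : Unitization ℂ A))
  simp only [← Unitization.inr_star, ← Unitization.inr_mul, ← Finset.sum_comm] at h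
  rw [show (∑ j, ((star (c j) * y * d j : A) : Unitization ℂ A))
        = ((∑ j, star (c j) * y * d j : A) : Unitization ℂ A) from
      (map_sum (Unitization.inrNonUnitalAlgHom ℂ A) _ _).symm,
    show (∑ j, ((star (c j) * c j : A) : Unitization ℂ A))
        = ((∑ j, star (c j) * c j : A) : Unitization ℂ A) from
      (map_sum (Unitization.inrNonUnitalAlgHom ℂ A) _ _).symm,
    show (∑ j, ((star (d j) * d j : A) : Unitization ℂ A))
        = ((∑ j, star (d j) * d j : A) : Unitization ℂ A) from
      (map_sum (Unitization.inrNonUnitalAlgHom ℂ A) _ _).symm,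
    Unitization.norm_inr, Unitization.norm_inr, Unitization.norm_inr,
    Unitization.norm_inr] at h
  exact h
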